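/- Let p(ν | y) = ∏_{c} y_c^{ν(c)} (1-y_c)^{1-ν(c)} over Boolean assignments ν : Fin n → {0,1}, with each y_c ∈ (0,1). Let K be a satisfiable set of assignments (a nonempty subset of assignments) and define the semantic loss L(y) = -log Σ_{ν ∈ K} p(ν | y). Then ∂L/∂y_c = (y_c - E[ν(c) | K, y]) / (y_c(1-y_c)), where E[ν(c) | K, y] = (Σ_{ν ∈ K} p(ν|y)·ν(c)) / (Σ_{ν ∈ K} p(ν|y)). -/

import Mathlib

open Finset

/-- Bernoulli likelihood `p(ν | y) = ∏_c y_c^{ν(c)} (1-y_c)^{1-ν(c)}`. -/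
noncomputable def bernLik {n : ℕ} (y : Fin n → ℝ) (ν : Fin n → Bool) : ℝ :=
  ∏ c, (y c) ^ (if ν c then 1 else 0 : ℕ) * (1 - y c) ^ (1 - (if ν c then 1 else 0) : ℕ)

/-- Semantic loss `L(y) = -log Σ_{ν ∈ K} p(ν | y)`. -/
noncomputable def semLoss {n : ℕ} (K : Finset (Fin n → Bool)) (y : Fin n → ℝ) : ℝ :=
  -Real.log (∑ ν ∈ K, bernLik y ν)

/-- Gradient of the semantic loss:
`∂L/∂y_c = (y_c - E[ν(c) | K, y]) / (y_c (1 - y_c))`. -/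
theorem semLoss_partial {n : ℕ} (K : Finset (Fin n → Bool)) (hK : K.Nonempty)
    (y : Fin n → ℝ) (hy : ∀ c, y c ∈ Set.Ioo (0 : ℝ) 1) (c : Fin n) :
    fderiv ℝ (semLoss K) y (Pi.single c 1) =
      (y c - (∑ ν ∈ K, bernLik y ν * (if ν c then 1 else 0)) / (∑ ν ∈ K, bernLik y ν)) /
        (y c * (1 - y c)) := by
  classical
  obtain ⟨hc0, hc1⟩ := hy c
  set C : (Fin n → Bool) → ℝ := fun ν =>
    ∏ d ∈ univ.erase c,
      (y d) ^ (if ν d then 1 else 0 : ℕ) * (1 - y d) ^ (1 - (if ν d then 1 else 0) : ℕ)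
    with hCdef
  have hbern_update : ∀ (t : ℝ) ν, bernLik (Function.update y c t) ν
      = C ν * (if ν c then t else 1 - t) := by
    intro t ν
    unfold bernLik
    rw [← Finset.prod_erase_mul univ _ (mem_univ c)]
    congr 1
    · apply Finset.prod_congr rfl
      intro d hd
      rw [Function.update_of_ne (Finset.ne_of_mem_erase hd)]
    · rw [Function.update_self]
      cases h : ν c <;> simp [h]
  have hbern : ∀ ν, bernLik y ν = C ν * (if ν c then y c else 1 - y c) := by
    intro ν
    have h := hbern_update (y c) ν
    rwa [Function.update_eq_self] at h
  have hCpos : ∀ ν, 0 < C ν := by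
    intro ν
    apply Finset.prod_pos
    intro d _
    have h1 := (hy d).1
    have h2 := (hy d).2
    exact mul_pos (pow_pos h1 _) (pow_pos (by linarith) _)
  have hbpos : ∀ ν, 0 < bernLik y ν := by
    intro ν
    rw [hbern ν]
    apply mul_pos (hCpos ν)
    split <;> linarith
  set S : ℝ := ∑ ν ∈ K, bernLik y ν with hSdef
  have hS : 0 < S := Finset.sum_pos (fun ν _ => hbpos ν) hK
  -- differentiability of semLoss at y
  have hf : DifferentiableAt ℝ (fun z : Fin n → ℝ => ∑ ν ∈ K, bernLik z ν) y := by
    apply DifferentiableAt.fun_sum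
    intro ν _
    unfold bernLik
    have : ∀ s : Finset (Fin n), DifferentiableAt ℝ (fun z : Fin n → ℝ =>
        ∏ d ∈ s, (z d) ^ (if ν d then 1 else 0 : ℕ)
          * (1 - z d) ^ (1 - (if ν d then 1 else 0) : ℕ)) y := by
      intro s
      induction s using Finset.induction with
      | empty => simp only [Finset.prod_empty]; exact differentiableAt_const (1:ℝ)
      | insert _ _ hd ih =>
        simp only [Finset.prod_insert hd]
        exact ((((ContinuousLinearMap.proj _ : (Fin n → ℝ) →L[ℝ] ℝ).differentiableAt).pow _).mul
          (((differentiableAt_const (1:ℝ)).sub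
            (ContinuousLinearMap.proj _ : (Fin n → ℝ) →L[ℝ] ℝ).differentiableAt).pow _)).mul ih
    exact this univ
  have hdiff : DifferentiableAt ℝ (semLoss K) y := by
    have : DifferentiableAt ℝ (fun z : Fin n → ℝ =>
        -Real.log (∑ ν ∈ K, bernLik z ν)) y := (hf.log hS.ne').neg
    exact this.congr_of_eventuallyEq (by filter_upwards with z; rfl)
  have hfd : HasFDerivAt (semLoss K) (fderiv ℝ (semLoss K) y)
      (Function.update y c (y c)) := by
    rw [Function.update_eq_self]; exact hdiff.hasFDerivAt
  have h1 : HasDerivAt (fun t => semLoss K (Function.update y c t))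
      (fderiv ℝ (semLoss K) y (Pi.single c 1)) (y c) :=
    hfd.comp_hasDerivAt (y c) (hasDerivAt_update y c (y c))
  -- direct computation of the same derivative
  set D : ℝ := ∑ ν ∈ K, C ν * (if ν c then 1 else -1) with hDdef
  have hsum : HasDerivAt (fun t => ∑ ν ∈ K, C ν * (if ν c then t else 1 - t)) D (y c) := by
    apply HasDerivAt.fun_sum
    intro ν _
    cases h : ν c
    · simpa [h] using ((hasDerivAt_id (y c)).const_sub 1).const_mul (C ν)
    · simpa [h] using (hasDerivAt_id (y c)).const_mul (C ν)
  have hSval : (∑ ν ∈ K, C ν * (if ν c then y c else 1 - y c)) = S := by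
    rw [hSdef]
    exact Finset.sum_congr rfl fun ν _ => (hbern ν).symm
  have h2 : HasDerivAt (fun t => semLoss K (Function.update y c t)) (-(D / S)) (y c) := by
    have hlog : HasDerivAt
        (fun t => Real.log (∑ ν ∈ K, C ν * (if ν c then t else 1 - t))) (D / S) (y c) := by
      have := hsum.log (by rw [hSval]; exact hS.ne')
      rwa [hSval] at this
    have := hlog.neg
    apply this.congr_of_eventuallyEq
    filter_upwards with t
    simp only [semLoss, hbern_update, Pi.neg_apply]
  have hval : fderiv ℝ (semLoss K) y (Pi.single c 1) = -(D / S) := h1.unique h2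
  rw [hval]
  have key : D * (y c * (1 - y c)) =
      (∑ ν ∈ K, if ν c then bernLik y ν else 0) - y c * S := by
    rw [hDdef, hSdef, Finset.sum_mul, Finset.mul_sum, ← Finset.sum_sub_distrib]
    apply Finset.sum_congr rfl
    intro ν _
    rw [hbern ν]
    cases h : ν c <;> simp [h] <;> ring
  have hyc : y c ≠ 0 := hc0.ne'
  have hyc1 : (1 : ℝ) - y c ≠ 0 := by linarith
  have hSne := hS.ne'
  have hN : (∑ ν ∈ K, bernLik y ν * (if ν c then 1 else 0)) =
      ∑ ν ∈ K, if ν c then bernLik y ν else 0 :=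
    Finset.sum_congr rfl fun ν _ => by split <;> simp
  rw [eq_div_iff (mul_ne_zero hyc hyc1), hN, neg_mul, div_mul_eq_mul_div, key, sub_div,
    mul_div_assoc, div_self hSne]
  ring
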